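/- Let k be an algebraically closed field of characteristic p > 3, and W(1) = Der_k(k[X]/(X^p)). Then W(1)_0 = span{x∂, x^2∂, ..., x^{p−1}∂} is a maximal solvable Lie subalgebra of W(1): it is solvable and any solvable subalgebra of W(1) properly containing it does not exist. -/

import Mathlib

open Polynomial

set_option synthInstance.maxHeartbeats 1000000
set_option maxHeartbeats 1000000

/-- The truncated polynomial algebra `A(1) = k[X]/(X^p)`. -/
noncomputable abbrev TruncPolyAlg (k : Type*) [Field k] (p : ℕ) :=
  Polynomial k ⧸ Ideal.span {(X : Polynomial k) ^ p}

/-- The image of `X` in `A(1) = k[X]/(X^p)`. -/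
noncomputable abbrev truncX (k : Type*) [Field k] (p : ℕ) : TruncPolyAlg k p :=
  Ideal.Quotient.mk _ (X : Polynomial k)

set_option linter.unusedSectionVars false

namespace WittAux

variable (k : Type*) [Field k] (p : ℕ) [Fact p.Prime] [CharP k p]

abbrev Wder := Derivation k (TruncPolyAlg k p) (TruncPolyAlg k p)

lemma tmk_surj : Function.Surjective (Ideal.Quotient.mkₐ k (Ideal.span {(X : Polynomial k) ^ p})) :=
  Ideal.Quotient.mkₐ_surjective k _

lemma deriv_ker : ∀ f : Polynomial k, Ideal.Quotient.mkₐ k (Ideal.span {(X : Polynomial k) ^ p}) f = 0 →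
    Ideal.Quotient.mkₐ k (Ideal.span {(X : Polynomial k) ^ p}) (Polynomial.derivative' f) = 0 := by
  intro f hf
  rw [Ideal.Quotient.mkₐ_eq_mk, Ideal.Quotient.eq_zero_iff_mem] at hf ⊢
  obtain ⟨g, rfl⟩ := Ideal.mem_span_singleton.mp hf
  have : Polynomial.derivative' (R := k) (X ^ p * g) = X ^ p * derivative g := by
    simp [derivative_mul, derivative_X_pow, CharP.cast_eq_zero k p]
  rw [this]
  exact Ideal.mem_span_singleton.mpr ⟨derivative g, rfl⟩

noncomputable def del : Wder k p :=
  Derivation.liftOfSurjective (tmk_surj k p) (deriv_ker k p)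

lemma del_mk (f : Polynomial k) :
    del k p (Ideal.Quotient.mk _ f) = Ideal.Quotient.mk _ (derivative f) := by
  have := Derivation.liftOfSurjective_apply (tmk_surj k p) (deriv_ker k p) f
  simpa [Ideal.Quotient.mkₐ_eq_mk, del] using this

lemma del_x : del k p (truncX k p) = 1 := by
  rw [show truncX k p = Ideal.Quotient.mk _ (X : Polynomial k) from rfl, del_mk]
  simp


lemma adjoin_x : Algebra.adjoin k {truncX k p} = ⊤ := by
  have h1 : ({truncX k p} : Set (TruncPolyAlg k p)) =
      (Ideal.Quotient.mkₐ k (Ideal.span {(X : Polynomial k) ^ p})) '' {(X : Polynomial k)} := by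
    simp [Ideal.Quotient.mkₐ_eq_mk]
  rw [h1, ← AlgHom.map_adjoin, Polynomial.adjoin_X, Algebra.map_top]
  exact (AlgHom.range_eq_top _).mpr (tmk_surj k p)

lemma ext_x {D₁ D₂ : Wder k p} (h : D₁ (truncX k p) = D₂ (truncX k p)) : D₁ = D₂ :=
  Derivation.ext_of_adjoin_eq_top _ (adjoin_x k p) (Set.eqOn_singleton.mpr h)

lemma eq_smul (D : Wder k p) : D = D (truncX k p) • del k p :=
  ext_x k p (by rw [Derivation.smul_apply, del_x, smul_eq_mul, mul_one])

lemma apply_eq (D : Wder k p) (a : TruncPolyAlg k p) :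
    D a = D (truncX k p) * del k p a := by
  conv_lhs => rw [eq_smul k p D]
  rw [Derivation.smul_apply, smul_eq_mul]

lemma xp : (truncX k p) ^ p = 0 := by
  rw [show truncX k p = Ideal.Quotient.mk _ (X : Polynomial k) from rfl, ← map_pow,
    Ideal.Quotient.eq_zero_iff_mem]
  exact Ideal.subset_span rfl

lemma del_dvd (n : ℕ) (a : TruncPolyAlg k p) (h : truncX k p ^ (n+1) ∣ a) :
    truncX k p ^ n ∣ del k p a := by
  obtain ⟨b, rfl⟩ := h
  rw [Derivation.leibniz, Derivation.leibniz_pow, del_x]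
  refine dvd_add ?_ ?_
  · rw [smul_eq_mul]
    exact Dvd.dvd.mul_right (pow_dvd_pow _ n.le_succ) _
  · have : (n + 1) • truncX k p ^ (n + 1 - 1) • (1 : TruncPolyAlg k p)
        = ((n+1 : ℕ) : TruncPolyAlg k p) * truncX k p ^ n := by
      rw [smul_eq_mul, mul_one, nsmul_eq_mul, Nat.add_sub_cancel]
    rw [this, smul_eq_mul]
    exact Dvd.dvd.mul_left (dvd_mul_left _ _) _
lemma brkt (D E : Wder k p) (m n : ℕ) (hD : truncX k p ^ (m+1) ∣ D (truncX k p))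
    (hE : truncX k p ^ (n+1) ∣ E (truncX k p)) :
    truncX k p ^ (m+n+1) ∣ ⁅D, E⁆ (truncX k p) := by
  rw [Derivation.commutator_apply, apply_eq k p D (E (truncX k p)),
    apply_eq k p E (D (truncX k p))]
  refine dvd_sub ?_ ?_
  · have h1 := del_dvd k p n _ hE
    have : truncX k p ^ (m+n+1) = truncX k p ^ (m+1) * truncX k p ^ n := by
      rw [← pow_add]; ring_nf
    rw [this]; exact mul_dvd_mul hD h1
  · have h1 := del_dvd k p m _ hD
    have : truncX k p ^ (m+n+1) = truncX k p ^ (n+1) * truncX k p ^ m := by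
      rw [← pow_add]; ring_nf
    rw [this]; exact mul_dvd_mul hE h1

lemma brkt0 (D E : Wder k p) (hD : truncX k p ∣ D (truncX k p))
    (hE : truncX k p ∣ E (truncX k p)) :
    truncX k p ^ 2 ∣ ⁅D, E⁆ (truncX k p) := by
  obtain ⟨a, ha⟩ := hD
  obtain ⟨b, hb⟩ := hE
  rw [Derivation.commutator_apply, apply_eq k p D (E (truncX k p)),
    apply_eq k p E (D (truncX k p)), ha, hb, Derivation.leibniz, Derivation.leibniz, del_x,
    smul_eq_mul, smul_eq_mul, smul_eq_mul, smul_eq_mul, mul_one, mul_one]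
  have : truncX k p * a * (truncX k p * del k p b + b)
      - truncX k p * b * (truncX k p * del k p a + a)
      = truncX k p ^ 2 * (a * del k p b - b * del k p a) := by ring
  rw [this]
  exact Dvd.intro _ rfl

noncomputable def B0 : LieSubalgebra k (Wder k p) where
  carrier := {D | truncX k p ∣ D (truncX k p)}
  add_mem' := fun {a b} ha hb => by
    simp only [Set.mem_setOf_eq, Derivation.add_apply] at *
    exact dvd_add ha hb
  zero_mem' := by simp
  smul_mem' := fun c D hD => by
    simp only [Set.mem_setOf_eq, Derivation.smul_apply] at *
    rw [Algebra.smul_def]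
    exact Dvd.dvd.mul_left hD _
  lie_mem' := fun {D E} hD hE =>
    dvd_trans (dvd_pow_self (truncX k p) two_ne_zero) (brkt0 k p D E hD hE)

lemma mem_B0 (D : Wder k p) : D ∈ B0 k p ↔ truncX k p ∣ D (truncX k p) := Iff.rfl
lemma mem_span_aux (f : Polynomial k) :
    ((truncX k p * Ideal.Quotient.mk _ f) • del k p) ∈ Submodule.span k
      {D : Wder k p | ∃ i : ℕ, 1 ≤ i ∧ i ≤ p - 1 ∧ D (truncX k p) = truncX k p ^ i} := by
  induction f using Polynomial.induction_on' with
  | add f g hf hg =>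
    rw [map_add, mul_add, add_smul]
    exact add_mem hf hg
  | monomial n a =>
    have h1 : (Ideal.Quotient.mk (Ideal.span {(X : Polynomial k) ^ p}) (monomial n a)
        : TruncPolyAlg k p) = a • truncX k p ^ n := by
      have h := (Algebra.smul_def a ((truncX k p)^n)).symm
      rw [← C_mul_X_pow_eq_monomial, map_mul, map_pow, ← h]
      rfl
    rw [h1]
    have h2 : truncX k p * a • truncX k p ^ n = a • truncX k p ^ (n+1) := by
      rw [mul_smul_comm, ← pow_succ']
    rw [h2, smul_assoc]
    rcases le_or_gt (n+1) (p-1) with h | h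
    · refine Submodule.smul_mem _ a (Submodule.subset_span ⟨n+1, Nat.succ_le_succ (Nat.zero_le n), h, ?_⟩)
      rw [Derivation.smul_apply, del_x, smul_eq_mul, mul_one]
    · have hp2 : 2 ≤ p := (Fact.out : p.Prime).two_le
      have hz : truncX k p ^ (n+1) = 0 := by
        have h3 : truncX k p ^ (n+1) = truncX k p ^ p * truncX k p ^ (n+1-p) := by
          rw [← pow_add]; congr 1; omega
        rw [h3, xp, zero_mul]
      have hzz : (0 : TruncPolyAlg k p) • del k p = 0 :=
        Derivation.ext fun b => by
          rw [Derivation.smul_apply, smul_eq_mul, zero_mul, Derivation.zero_apply]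
      rw [hz, hzz, smul_zero]
      exact Submodule.zero_mem _

lemma B0_eq : (B0 k p).toSubmodule = Submodule.span k
    {D : Wder k p | ∃ i : ℕ, 1 ≤ i ∧ i ≤ p - 1 ∧ D (truncX k p) = truncX k p ^ i} := by
  refine le_antisymm ?_ ?_
  · intro D hD
    have hD' : truncX k p ∣ D (truncX k p) := hD
    obtain ⟨c, hc⟩ := hD'
    obtain ⟨f, hf⟩ := Ideal.Quotient.mk_surjective c
    have hD2 : D = (truncX k p * Ideal.Quotient.mk _ f) • del k p := by
      rw [hf, ← hc]; exact eq_smul k p D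
    rw [hD2]
    exact mem_span_aux k p f
  · rw [Submodule.span_le]
    rintro D ⟨i, hi1, hi2, hD⟩
    show truncX k p ∣ D (truncX k p)
    rw [hD]
    exact dvd_pow_self _ (by omega)
noncomputable def idl (n : ℕ) : LieIdeal k ↥(B0 k p) where
  carrier := {b | truncX k p ^ (n+1) ∣ (b : Wder k p) (truncX k p)}
  add_mem' := fun {a b} ha hb => by
    simp only [Set.mem_setOf_eq] at *
    have h : ((a + b : ↥(B0 k p)) : Wder k p) = (a : Wder k p) + (b : Wder k p) := rfl
    rw [h, Derivation.add_apply]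
    exact dvd_add ha hb
  zero_mem' := by
    have h : (((0 : ↥(B0 k p))) : Wder k p) = 0 := rfl
    simp only [Set.mem_setOf_eq, h, Derivation.zero_apply]
    exact dvd_zero _
  smul_mem' := fun c b hb => by
    simp only [Set.mem_setOf_eq] at *
    have h : ((c • b : ↥(B0 k p)) : Wder k p) = c • (b : Wder k p) := rfl
    have h2 := (Algebra.smul_def c ((b : Wder k p) (truncX k p))).symm
    rw [h, Derivation.smul_apply, ← h2]
    exact Dvd.dvd.mul_left hb _
  lie_mem := fun {b m} hm => by
    simp only [Set.mem_setOf_eq] at *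
    have hco : ((⁅b, m⁆ : ↥(B0 k p)) : Wder k p) = ⁅(b : Wder k p), (m : Wder k p)⁆ := rfl
    rw [hco]
    have hb : truncX k p ^ (0+1) ∣ (b : Wder k p) (truncX k p) := by
      rw [zero_add, pow_one]; exact b.2
    have := brkt k p (b : Wder k p) (m : Wder k p) 0 n hb hm
    rwa [zero_add] at this

lemma mem_idl (n : ℕ) (b : ↥(B0 k p)) :
    b ∈ idl k p n ↔ truncX k p ^ (n+1) ∣ (b : Wder k p) (truncX k p) := Iff.rfl

lemma ds_le : ∀ n : ℕ, LieAlgebra.derivedSeries k ↥(B0 k p) (n+1) ≤ idl k p (n+1) := by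
  intro n
  induction n with
  | zero =>
    rw [LieAlgebra.derivedSeries_def, LieAlgebra.derivedSeriesOfIdeal_succ,
      LieAlgebra.derivedSeriesOfIdeal_zero]
    rw [LieSubmodule.lie_le_iff]
    intro b _ m _
    rw [mem_idl]
    have hco : ((⁅b, m⁆ : ↥(B0 k p)) : Wder k p) = ⁅(b : Wder k p), (m : Wder k p)⁆ := rfl
    rw [hco]
    exact brkt0 k p (b : Wder k p) (m : Wder k p) b.2 m.2
  | succ n ih =>
    have h1 : LieAlgebra.derivedSeries k ↥(B0 k p) (n+2) =
        ⁅LieAlgebra.derivedSeries k ↥(B0 k p) (n+1),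
          LieAlgebra.derivedSeries k ↥(B0 k p) (n+1)⁆ := by
      rw [LieAlgebra.derivedSeries_def, LieAlgebra.derivedSeriesOfIdeal_succ,
        ← LieAlgebra.derivedSeries_def]
    rw [h1]
    refine le_trans (LieSubmodule.mono_lie ih ih) ?_
    rw [LieSubmodule.lie_le_iff]
    intro b hb m hm
    rw [mem_idl] at hb hm ⊢
    have := brkt k p (b : Wder k p) (m : Wder k p) (n+1) (n+1) hb hm
    have hco : ((⁅b, m⁆ : ↥(B0 k p)) : Wder k p) = ⁅(b : Wder k p), (m : Wder k p)⁆ := rfl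
    rw [hco]
    exact dvd_trans (pow_dvd_pow _ (by omega)) this

lemma B0_solvable : LieAlgebra.IsSolvable ↥(B0 k p) := by
  rw [LieAlgebra.isSolvable_iff k]
  refine ⟨p, ?_⟩
  have hp1 : 1 ≤ p := (Fact.out : p.Prime).one_lt.le
  have h1 : LieAlgebra.derivedSeries k ↥(B0 k p) p ≤ idl k p p := by
    have := ds_le k p (p-1)
    rwa [Nat.sub_add_cancel hp1] at this
  rw [eq_bot_iff]
  intro b hb
  have h2 := (mem_idl k p p b).mp (h1 hb)
  have h3 : truncX k p ^ (p+1) = 0 := by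
    rw [pow_succ, xp, zero_mul]
  rw [h3] at h2
  have h4 : (b : Wder k p) (truncX k p) = 0 := zero_dvd_iff.mp h2
  have h5 : (b : Wder k p) = 0 := by
    rw [eq_smul k p (b : Wder k p), h4]
    exact Derivation.ext fun c => by
      rw [Derivation.smul_apply, smul_eq_mul, zero_mul, Derivation.zero_apply]
  rw [LieSubmodule.mem_bot]
  exact Subtype.ext h5
set_option maxHeartbeats 4000000 in
lemma maximal (hp : 3 < p)
    (C : LieSubalgebra k (Wder k p)) (hCsolv : LieAlgebra.IsSolvable ↥C)
    (hBC : B0 k p < C) : False := by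
  classical
  haveI : Nontrivial (TruncPolyAlg k p) := by
    refine Ideal.Quotient.nontrivial_iff.mpr ?_
    intro htop
    have hu : IsUnit ((X : Polynomial k) ^ p) := (Ideal.span_singleton_eq_top).mp htop
    have := Polynomial.natDegree_eq_zero_of_isUnit hu
    rw [Polynomial.natDegree_X_pow] at this
    omega
  obtain ⟨D, hDC, hDB⟩ := SetLike.exists_of_lt hBC
  set x := truncX k p with hxdef
  set del := del k p with hdeldef
  obtain ⟨f, hf⟩ := Ideal.Quotient.mk_surjective (D x)
  have hdec : (Ideal.Quotient.mk (Ideal.span {(X : Polynomial k)^p}) f : TruncPolyAlg k p)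
      = x * Ideal.Quotient.mk _ f.divX + algebraMap k _ (f.coeff 0) := by
    conv_lhs => rw [← X_mul_divX_add f]
    rw [map_add, map_mul]
    rfl
  have hc : f.coeff 0 ≠ 0 := by
    intro h0
    apply hDB
    show x ∣ D x
    rw [← hf, hdec, h0, map_zero, add_zero]
    exact dvd_mul_right _ _
  set r : TruncPolyAlg k p := Ideal.Quotient.mk _ f.divX with hrdef
  -- elements of B0
  have hmem1 : (x * r) • del ∈ B0 k p := by
    show x ∣ ((x * r) • del) x
    rw [Derivation.smul_apply, del_x, smul_eq_mul, mul_one]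
    exact dvd_mul_right _ _
  have hmem2 : x • del ∈ B0 k p := by
    show x ∣ (x • del) x
    rw [Derivation.smul_apply, del_x, smul_eq_mul, mul_one]
  have hmem3 : (x * x) • del ∈ B0 k p := by
    show x ∣ ((x * x) • del) x
    rw [Derivation.smul_apply, del_x, smul_eq_mul, mul_one]
    exact dvd_mul_right _ _
  -- del ∈ C
  have h1 : D - (x * r) • del = (f.coeff 0) • del := by
    refine Derivation.ext fun a => ?_
    rw [Derivation.sub_apply, apply_eq k p D a, ← hxdef, ← hdeldef, ← hf, hdec,
      Derivation.smul_apply, Derivation.smul_apply, smul_eq_mul, add_mul, add_sub_cancel_left]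
    exact (Algebra.smul_def (f.coeff 0) (del a)).symm
  have hdelC : del ∈ C := by
    have h2 : del = (f.coeff 0)⁻¹ • ((f.coeff 0) • del) := by
      rw [smul_smul, inv_mul_cancel₀ hc, one_smul]
    rw [h2, ← h1]
    exact C.smul_mem _ (sub_mem hDC (hBC.le hmem1))
  have hgC : x • del ∈ C := hBC.le hmem2
  have hfC : (x * x) • del ∈ C := hBC.le hmem3
  -- bracket identities
  have hdelx : del x = 1 := del_x k p
  have hdel1 : del (1 : TruncPolyAlg k p) = 0 := del.map_one_eq_zero
  have hgx : (x • del) x = x := by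
    rw [Derivation.smul_apply, hdelx, smul_eq_mul, mul_one]
  have hfx : ((x * x) • del) x = x * x := by
    rw [Derivation.smul_apply, hdelx, smul_eq_mul, mul_one]
  have hdxx : del (x * x) = x + x := by
    rw [Derivation.leibniz, hdelx, smul_eq_mul]
    ring
  have hb1 : ⁅del, x • del⁆ = del := by
    refine ext_x k p ?_
    rw [Derivation.commutator_apply, ← hxdef, hgx, hdelx, Derivation.smul_apply, hdel1,
      smul_eq_mul, mul_zero, sub_zero]
  have hb2 : ⁅del, (x * x) • del⁆ = x • del + x • del := by
    refine ext_x k p ?_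
    rw [Derivation.commutator_apply, ← hxdef, hfx, hdxx, hdelx, Derivation.smul_apply, hdel1,
      Derivation.add_apply, hgx, smul_eq_mul, mul_zero, sub_zero]
  have hb3 : ⁅x • del, (x * x) • del⁆ = (x * x) • del := by
    refine ext_x k p ?_
    rw [Derivation.commutator_apply, ← hxdef, hfx, hgx, Derivation.smul_apply, hdxx, hfx,
      smul_eq_mul]
    ring
  -- move to C
  set e' : ↥C := ⟨del, hdelC⟩ with he'
  set g' : ↥C := ⟨x • del, hgC⟩ with hg'
  set f' : ↥C := ⟨(x * x) • del, hfC⟩ with hf'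
  have hC1 : ⁅e', g'⁆ = e' := Subtype.ext (by
    have : ((⁅e', g'⁆ : ↥C) : Wder k p) = ⁅del, x • del⁆ := rfl
    rw [this, hb1])
  have hC2 : ⁅e', f'⁆ = g' + g' := Subtype.ext (by
    have : ((⁅e', f'⁆ : ↥C) : Wder k p) = ⁅del, (x * x) • del⁆ := rfl
    rw [this, hb2]
    rfl)
  have hC3 : ⁅g', f'⁆ = f' := Subtype.ext (by
    have : ((⁅g', f'⁆ : ↥C) : Wder k p) = ⁅x • del, (x * x) • del⁆ := rfl
    rw [this, hb3])
  have h2k : (2 : k) ≠ 0 := by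
    have h2n : ((2 : ℕ) : k) ≠ 0 := by
      intro h
      have := (CharP.cast_eq_zero_iff k p 2).mp h
      have := Nat.le_of_dvd (by norm_num) this
      omega
    simpa using h2n
  have hg2 : g' = (2 : k)⁻¹ • (g' + g') := by
    rw [← two_smul k g', smul_smul, inv_mul_cancel₀ h2k, one_smul]
  -- derived series of C never dies
  have hsucc : ∀ n, LieAlgebra.derivedSeries k ↥C (n+1) =
      ⁅LieAlgebra.derivedSeries k ↥C n, LieAlgebra.derivedSeries k ↥C n⁆ := fun n => by
    rw [LieAlgebra.derivedSeries_def, LieAlgebra.derivedSeriesOfIdeal_succ,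
      ← LieAlgebra.derivedSeries_def]
  have claim : ∀ n, e' ∈ LieAlgebra.derivedSeries k ↥C n ∧
      g' ∈ LieAlgebra.derivedSeries k ↥C n ∧ f' ∈ LieAlgebra.derivedSeries k ↥C n := by
    intro n
    induction n with
    | zero => exact ⟨LieSubmodule.mem_top _, LieSubmodule.mem_top _, LieSubmodule.mem_top _⟩
    | succ n ih =>
      obtain ⟨he, hg, hfm⟩ := ih
      rw [hsucc n]
      refine ⟨?_, ?_, ?_⟩
      · rw [← hC1]; exact LieSubmodule.lie_mem_lie he hg
      · rw [hg2, ← hC2]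
        exact SMulMemClass.smul_mem _ (LieSubmodule.lie_mem_lie he hfm)
      · rw [← hC3]; exact LieSubmodule.lie_mem_lie hg hfm
  obtain ⟨n, hn⟩ := (LieAlgebra.isSolvable_iff k _).mp hCsolv
  have he := (claim n).1
  rw [hn, LieSubmodule.mem_bot] at he
  have : del = 0 := by
    have := congrArg (fun z : ↥C => (z : Wder k p)) he
    exact this
  have h10 : (1 : TruncPolyAlg k p) = 0 := by
    rw [← hdelx, this, Derivation.zero_apply]
  exact one_ne_zero h10

end WittAux

/-- for `k` algebraically closed of characteristic `p > 3`,
`W(1)₀ = span{x∂, x²∂, …, x^{p-1}∂}` is a maximal solvable Lie subalgebra of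
`W(1) = Der_k(k[X]/(X^p))`: it is a solvable Lie subalgebra and there exists
no solvable Lie subalgebra properly containing it. -/
theorem witt_W0_maximal_solvable
    {p : ℕ} [Fact p.Prime] (hp : 3 < p)
    {k : Type*} [Field k] [IsAlgClosed k] [CharP k p] :
    ∃ B : LieSubalgebra k (Derivation k (TruncPolyAlg k p) (TruncPolyAlg k p)),
      B.toSubmodule = Submodule.span k
        {D : Derivation k (TruncPolyAlg k p) (TruncPolyAlg k p) |
          ∃ i : ℕ, 1 ≤ i ∧ i ≤ p - 1 ∧ D (truncX k p) = truncX k p ^ i} ∧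
      LieAlgebra.IsSolvable B ∧
      ¬ ∃ C : LieSubalgebra k (Derivation k (TruncPolyAlg k p) (TruncPolyAlg k p)),
          LieAlgebra.IsSolvable C ∧ B < C := by
  refine ⟨WittAux.B0 k p, WittAux.B0_eq k p, WittAux.B0_solvable k p, ?_⟩
  rintro ⟨C, hCsolv, hBC⟩
  exact WittAux.maximal k p hp C hCsolv hBC
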